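/- Let w : Fin 2 → ℝ with each w i equal to 1 or −1, let Q be the diagonal quadratic form on Fin 2 → ℝ with weights w (QuadraticMap.weightedSumSquares), and let A = CliffordAlgebra Q. Define the Clifford conjugation conj : A → A as the composition of the reversal anti-automorphism with the grade involution. Then for every a ∈ A, the product a · conj a is a real scalar, i.e., it lies in the range of the algebra map ℝ → A. -/
import Mathlib

lemma clifford_map_star {R M₁ M₂ : Type*} [CommRing R] [AddCommGroup M₁] [AddCommGroup M₂]
    [Module R M₁] [Module R M₂] {Q₁ : QuadraticForm R M₁} {Q₂ : QuadraticForm R M₂}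
    (f : Q₁ →qᵢ Q₂) (x : CliffordAlgebra Q₁) :
    CliffordAlgebra.map f (star x) = star (CliffordAlgebra.map f x) := by
  induction x using CliffordAlgebra.induction with
  | algebraMap r => simp [CliffordAlgebra.star_def]
  | ι m => simp [CliffordAlgebra.star_ι]
  | mul a b ha hb => rw [star_mul, map_mul, map_mul, star_mul, ha, hb]
  | add a b ha hb => rw [star_add, map_add, map_add, star_add, ha, hb]

theorem clifford2_mul_conj_is_scalar (w : Fin 2 → ℝ)
    (hw : ∀ i, w i = 1 ∨ w i = -1)
    (a : CliffordAlgebra (QuadraticMap.weightedSumSquares ℝ w)) :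
    a * CliffordAlgebra.reverse (CliffordAlgebra.involute a) ∈
      Set.range (algebraMap ℝ (CliffordAlgebra (QuadraticMap.weightedSumSquares ℝ w))) := by
  let iso : (QuadraticMap.weightedSumSquares ℝ w).IsometryEquiv
      (CliffordAlgebraQuaternion.Q (w 0) (w 1)) :=
    { LinearEquiv.finTwoArrow ℝ ℝ with
      map_app' := fun m => by
        simp [CliffordAlgebraQuaternion.Q_apply, QuadraticMap.weightedSumSquares_apply,
          Fin.sum_univ_two, LinearEquiv.finTwoArrow, smul_eq_mul] }
  let φ := (CliffordAlgebra.equivOfIsometry iso).trans CliffordAlgebraQuaternion.equiv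
  have hφstar : ∀ x, φ (star x) = star (φ x) := fun x => by
    show CliffordAlgebraQuaternion.toQuaternion
        (CliffordAlgebra.map iso.toIsometry (star x)) = _
    rw [clifford_map_star, CliffordAlgebraQuaternion.toQuaternion_star]
    rfl
  have key : φ (a * CliffordAlgebra.reverse (CliffordAlgebra.involute a))
      = algebraMap ℝ _ ((φ a * star (φ a)).re) := by
    rw [map_mul, ← CliffordAlgebra.star_def, hφstar,
      QuaternionAlgebra.mul_star_eq_coe]
    rfl
  have := congrArg φ.symm key
  rw [AlgEquiv.symm_apply_apply] at this
  rw [this, AlgEquiv.commutes]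
  exact ⟨_, rfl⟩
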